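/- Let k ≥ 1, let p < q be odd primes, n = 2^k·p·q, M = 2^{k+1} - 1, a = σ(n) - 2n. If n is weird then M < p < 2M. -/

import Mathlib

/-- Sum of the positive divisors of `n`. -/
def sigma' (n : ℕ) : ℕ := ∑ d ∈ n.divisors, d

/-- `n` is abundant if `σ(n) > 2n`. -/
def Abundant (n : ℕ) : Prop := 2 * n < sigma' n

/-- `n` is pseudoperfect (in the weak sense) if some subset of its proper divisors sums to `n`. -/
def Pseudoperfect (n : ℕ) : Prop := ∃ s ⊆ n.properDivisors, ∑ d ∈ s, d = n

/-- `n` is weird if it is abundant and no subset of its proper divisors sums to `n`. -/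
def Weird (n : ℕ) : Prop := Abundant n ∧ ¬ Pseudoperfect n

lemma exists_subset_sum_two_pow : ∀ K m : ℕ, m < 2 ^ K →
    ∃ s ⊆ Finset.range K, ∑ i ∈ s, 2 ^ i = m := by
  intro K
  induction K with
  | zero => intro m hm; interval_cases m; exact ⟨∅, by simp, by simp⟩
  | succ K ih =>
    intro m hm
    by_cases h : m < 2 ^ K
    · obtain ⟨s, hs, hsum⟩ := ih m h
      exact ⟨s, hs.trans (Finset.range_subset_range.2 (Nat.le_succ K)), hsum⟩
    · push_neg at h
      obtain ⟨s, hs, hsum⟩ := ih (m - 2 ^ K) (by omega)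
      refine ⟨insert K s, ?_, ?_⟩
      · intro x hx
        rcases Finset.mem_insert.1 hx with rfl | hx
        · exact Finset.self_mem_range_succ x
        · exact (Finset.range_subset_range.2 (Nat.le_succ K)) (hs hx)
      · have hK : K ∉ s := fun h' => by simpa using hs h'
        rw [Finset.sum_insert hK, hsum]; omega

lemma sum_range_two_pow (k : ℕ) : ∑ i ∈ Finset.range k, 2 ^ i = 2 ^ k - 1 := by
  induction k with
  | zero => simp
  | succ k ih =>
    rw [Finset.sum_range_succ, ih]
    have := Nat.one_le_two_pow (n := k); ring_nf; omega

lemma sigma'_two_pow (k : ℕ) : (∑ d ∈ (2 ^ k).divisors, d) = 2 ^ (k + 1) - 1 := by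
  rw [Nat.sum_divisors_prime_pow Nat.prime_two, sum_range_two_pow]

lemma sigma'_prime {p : ℕ} (hp : p.Prime) : (∑ d ∈ p.divisors, d) = p + 1 := by
  rw [hp.divisors, Finset.sum_insert (by simp [hp.one_lt.ne])]
  simp [Nat.add_comm]

theorem weird_p_bounds (k p q : ℕ) (hk : 1 ≤ k) (hp : p.Prime) (hq : q.Prime)
    (hop : Odd p) (hoq : Odd q) (hpq : p < q) (hw : Weird (2 ^ k * p * q)) :
    2 ^ (k + 1) - 1 < p ∧ p < 2 * (2 ^ (k + 1) - 1) := by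
  have h2p : Nat.Coprime 2 p := Nat.coprime_two_left.mpr hop
  have h2q : Nat.Coprime 2 q := Nat.coprime_two_left.mpr hoq
  have hcop : (2 ^ k).Coprime (p * q) := Nat.Coprime.pow_left k (h2p.mul_right h2q)
  have hpqcop : p.Coprime q := (Nat.coprime_primes hp hq).2 hpq.ne
  have hp3 : 3 ≤ p := by obtain ⟨m, rfl⟩ := hop; have := hp.two_le; omega
  have hq1 : 1 < q := hq.one_lt
  have hpq1 : 1 < p * q := by nlinarith
  have h2k : 1 ≤ 2 ^ k := Nat.one_le_two_pow
  set n : ℕ := 2 ^ k * p * q with hn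
  have hn' : n = 2 ^ k * (p * q) := by rw [hn, mul_assoc]
  have hσ : sigma' n = (2 ^ (k + 1) - 1) * ((p + 1) * (q + 1)) := by
    rw [hn', sigma']
    rw [Nat.Coprime.sum_divisors_mul hcop, Nat.Coprime.sum_divisors_mul hpqcop,
      sigma'_two_pow, sigma'_prime hp, sigma'_prime hq]
  -- membership helpers
  have hmem_pow_mul : ∀ j ≤ k, ∀ c, c ∣ p * q → c < p * q ∨ j < k →
      2 ^ j * c ∈ n.properDivisors := by
    intro j hj c hc hlt
    rw [Nat.mem_properDivisors, hn']
    constructor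
    · exact mul_dvd_mul (pow_dvd_pow 2 hj) hc
    · rcases hlt with h | h
      · calc 2 ^ j * c ≤ 2 ^ k * c := Nat.mul_le_mul_right c (Nat.pow_le_pow_right (by norm_num) hj)
          _ < 2 ^ k * (p * q) := by
              have h2kpos : 0 < 2 ^ k := Nat.pow_pos (by norm_num)
              exact (Nat.mul_lt_mul_left h2kpos).2 h
      · have hc' : c ≤ p * q := Nat.le_of_dvd (by positivity) hc
        calc 2 ^ j * c ≤ 2 ^ j * (p * q) := Nat.mul_le_mul_left _ hc'
          _ < 2 ^ k * (p * q) := by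
              have : (2:ℕ) ^ j < 2 ^ k := Nat.pow_lt_pow_right (by norm_num) h
              exact (Nat.mul_lt_mul_right (by positivity)).2 this
  -- Part 1 : M < p
  have h1 : 2 ^ (k + 1) - 1 < p := by
    by_contra hle
    push_neg at hle
    apply hw.2
    obtain ⟨s, hs, hsum⟩ := exists_subset_sum_two_pow (k + 1) p (by omega)
    set t1 : Finset ℕ := (Finset.range k).image (fun i => 2 ^ i * (p * q)) with ht1
    set t2 : Finset ℕ := s.image (fun i => 2 ^ i * q) with ht2
    have hdisj : Disjoint t1 t2 := by
      rw [Finset.disjoint_left]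
      rintro x hx1 hx2
      simp only [ht1, ht2, Finset.mem_image] at hx1 hx2
      obtain ⟨i, hi, rfl⟩ := hx1
      obtain ⟨j, hj, hij⟩ := hx2
      have hq0 : 0 < q := by omega
      have heq : 2 ^ j * q = 2 ^ i * p * q := by rw [hij]; ring
      have h2 : 2 ^ j = 2 ^ i * p := Nat.eq_of_mul_eq_mul_right hq0 heq
      have hdvd : p ∣ 2 ^ j := ⟨2 ^ i, by rw [h2]; ring⟩
      have := (h2p.symm.pow_right j).eq_one_of_dvd hdvd
      omega
    refine ⟨t1 ∪ t2, ?_, ?_⟩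
    · intro x hx
      rcases Finset.mem_union.1 hx with hx | hx <;>
        simp only [ht1, ht2, Finset.mem_image] at hx
      · obtain ⟨i, hi, rfl⟩ := hx
        have hik : i < k := Finset.mem_range.1 hi
        exact hmem_pow_mul i hik.le (p * q) dvd_rfl (Or.inr hik)
      · obtain ⟨j, hj, rfl⟩ := hx
        have hjk : j ≤ k := by have := Finset.mem_range.1 (hs hj); omega
        exact hmem_pow_mul j hjk q (dvd_mul_left q p) (Or.inl (by nlinarith))
    · rw [Finset.sum_union hdisj]
      have hinj : ∀ c : ℕ, 0 < c → ∀ x ∈ (Finset.range (k+1)), ∀ y ∈ (Finset.range (k+1)),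
          2 ^ x * c = 2 ^ y * c → x = y := by
        intro c hc x _ y _ hxy
        have : (2:ℕ) ^ x = 2 ^ y := Nat.eq_of_mul_eq_mul_right hc hxy
        exact Nat.pow_right_injective (le_refl 2) this
      have e1 : ∑ d ∈ t1, d = (2 ^ k - 1) * (p * q) := by
        rw [ht1, Finset.sum_image (fun x hx y hy h => hinj (p*q) (by positivity) x
          (Finset.range_subset_range.2 (Nat.le_succ k) hx) y (Finset.range_subset_range.2 (Nat.le_succ k) hy) h)]
        rw [← Finset.sum_mul, sum_range_two_pow]
      have e2 : ∑ d ∈ t2, d = p * q := by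
        rw [ht2, Finset.sum_image (fun x hx y hy h => hinj q (by omega) x (hs hx) y (hs hy) h)]
        rw [← Finset.sum_mul, hsum]
      rw [e1, e2, hn', Nat.sub_one_mul]
      have : p * q ≤ 2 ^ k * (p * q) := Nat.le_mul_of_pos_left _ (by positivity)
      omega
  -- Part 2 : a > M
  have habund : 2 * n < sigma' n := hw.1
  have h2 : 2 ^ (k + 1) - 1 < sigma' n - 2 * n := by
    by_contra hle
    push_neg at hle
    apply hw.2
    set a : ℕ := sigma' n - 2 * n with ha
    obtain ⟨s, hs, hsum⟩ := exists_subset_sum_two_pow (k + 1) a (by omega)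
    set t : Finset ℕ := s.image (fun i => 2 ^ i) with ht
    have htsub : t ⊆ n.properDivisors := by
      intro x hx
      simp only [ht, Finset.mem_image] at hx
      obtain ⟨j, hj, rfl⟩ := hx
      have hjk : j ≤ k := by have := Finset.mem_range.1 (hs hj); omega
      have := hmem_pow_mul j hjk 1 (one_dvd _) (Or.inl hpq1)
      simpa using this
    have hts : ∑ d ∈ t, d = a := by
      rw [ht, Finset.sum_image (fun x _ y _ h => Nat.pow_right_injective (le_refl 2) h)]
      exact hsum
    refine ⟨n.properDivisors \ t, Finset.sdiff_subset, ?_⟩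
    have hsd := Finset.sum_sdiff htsub (f := id)
    simp only [id] at hsd
    have hps : sigma' n = ∑ d ∈ n.properDivisors, d + n := by
      rw [sigma']; exact Nat.sum_divisors_eq_sum_properDivisors_add_self
    omega
  refine ⟨h1, ?_⟩
  -- Part 3 : p < 2M
  by_contra hge
  push_neg at hge
  set m : ℕ := 2 ^ (k + 1) - 1 with hm
  have h2k1 : (2:ℕ) ≤ 2 ^ (k + 1) := by
    calc (2:ℕ) = 2 ^ 1 := rfl
      _ ≤ 2 ^ (k + 1) := Nat.pow_le_pow_right (by norm_num) (by omega)
  have hm1 : 1 ≤ m := by omega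
  have h2n : 2 * n = (m + 1) * (p * q) := by
    rw [hn]
    have : m + 1 = 2 ^ (k + 1) := by omega
    rw [this]; ring
  have hkey : m * (p + q) ≤ p * q := by
    calc m * (p + q) = m * p + m * q := by ring
      _ ≤ m * q + m * q := by
          have : m * p ≤ m * q := Nat.mul_le_mul_left m hpq.le
          omega
      _ = 2 * m * q := by ring
      _ ≤ p * q := Nat.mul_le_mul_right q hge
  have : sigma' n ≤ 2 * n + m := by
    rw [hσ, h2n]
    nlinarith [hkey]
  omega
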